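/- Let N be a positive integer and let A = {(2m−1)·2ⁿ : m, n positive integers with m ≤ N^(2/3) and n ≤ N^(1/3)} ⊆ ℕ. Then every subset B ⊆ A with |B| ≥ |A|/2 satisfies E×(B) ≥ N^(7/3)/2⁶. -/

import Mathlib

open Finset

/-- The set `{(2m−1)·2ⁿ : m, n ≥ 1, m ≤ N^(2/3), n ≤ N^(1/3)}`. -/
noncomputable def BWset (N : ℕ) : Finset ℕ :=
  ((Finset.Icc 1 N ×ˢ Finset.Icc 1 N).filter fun p =>
      (p.1 : ℝ) ≤ (N : ℝ) ^ ((2 : ℝ) / 3) ∧ (p.2 : ℝ) ≤ (N : ℝ) ^ ((1 : ℝ) / 3)).image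
    fun p => (2 * p.1 - 1) * 2 ^ p.2

/-- Multiplicative energy `E×(B) = #{(b₁,b₂,b₃,b₄) ∈ B⁴ : b₁b₂ = b₃b₄}`. -/
def mulE (B : Finset ℕ) : ℕ :=
  ((B ×ˢ B ×ˢ B ×ˢ B).filter fun x => x.1 * x.2.1 = x.2.2.1 * x.2.2.2).card

open scoped Pointwise Combinatorics.Additive

/-- `mulE` agrees with Mathlib's `mulEnergy`. -/
lemma mulE_eq_mulEnergy (B : Finset ℕ) : mulE B = Eₘ[B, B] := by
  unfold mulE Finset.mulEnergy
  refine Finset.card_bij' (fun q _ => ((q.1, q.2.2.1), (q.2.1, q.2.2.2)))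
    (fun q _ => (q.1.1, q.2.1, q.1.2, q.2.2)) ?_ ?_ (fun q _ => rfl) (fun q _ => rfl)
  · rintro ⟨b1, b2, b3, b4⟩ hq
    simp only [Finset.mem_filter, Finset.mem_product] at hq ⊢
    exact ⟨⟨⟨hq.1.1, hq.1.2.2.1⟩, hq.1.2.1, hq.1.2.2.2⟩, hq.2⟩
  · rintro ⟨⟨a1, a2⟩, c1, c2⟩ hq
    simp only [Finset.mem_filter, Finset.mem_product] at hq ⊢
    exact ⟨⟨hq.1.1.1, hq.1.2.1, hq.1.1.2, hq.1.2.2⟩, hq.2⟩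

lemma gauss_sum (a : ℕ) : 2 * ∑ j ∈ Finset.Icc 1 a, j = a * (a + 1) := by
  induction a with
  | zero => simp
  | succ k ih =>
    rw [Finset.sum_Icc_succ_top (by omega), Nat.mul_add, ih]
    ring

lemma small_case_num (a b : ℕ) (hb1 : 1 ≤ b) (hb2 : b ≤ 2) (h1 : b ^ 2 ≤ a)
    (h2 : a < (b + 1) ^ 2) : (b + 1) * (a + 1) ^ 3 ≤ 16 * a ^ 2 * b ^ 2 := by
  interval_cases b <;> [skip; skip] <;> (norm_num at h1 h2; interval_cases a <;> norm_num)

lemma odd_pow_inj {m n m' n' : ℕ} (hm : 1 ≤ m) (hm' : 1 ≤ m')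
    (h : (2 * m - 1) * 2 ^ n = (2 * m' - 1) * 2 ^ n') : m = m' ∧ n = n' := by
  induction n generalizing n' with
  | zero =>
    cases n' with
    | zero => simp at h; omega
    | succ k =>
      exfalso
      have : (2:ℕ) ∣ (2 * m' - 1) * 2 ^ (k + 1) := ⟨(2 * m' - 1) * 2 ^ k, by ring⟩
      rw [← h] at this
      simp at this
      omega
  | succ k ih =>
    cases n' with
    | zero =>
      exfalso
      have : (2:ℕ) ∣ (2 * m - 1) * 2 ^ (k + 1) := ⟨(2 * m - 1) * 2 ^ k, by ring⟩
      rw [h] at this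
      simp at this
      omega
    | succ l =>
      have h2 : (2 * m - 1) * 2 ^ k = (2 * m' - 1) * 2 ^ l := by
        have := h
        rw [pow_succ, pow_succ, ← mul_assoc, ← mul_assoc] at this
        omega
      obtain ⟨h3, h4⟩ := ih h2
      exact ⟨h3, by omega⟩

set_option maxHeartbeats 2000000 in
theorem mul_energy_lower_bound (N : ℕ) (hN : 0 < N) (B : Finset ℕ)
    (hBA : B ⊆ BWset N) (hB : ((BWset N).card : ℝ) / 2 ≤ B.card) :
    (N : ℝ) ^ ((7 : ℝ) / 3) / 2 ^ 6 ≤ (mulE B : ℝ) := by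
  have hN0 : (0:ℝ) ≤ (N:ℝ) := by positivity
  have hN1 : (1:ℝ) ≤ (N:ℝ) := by exact_mod_cast hN
  set a : ℕ := ⌊(N : ℝ) ^ ((2 : ℝ) / 3)⌋₊ with ha
  set b : ℕ := ⌊(N : ℝ) ^ ((1 : ℝ) / 3)⌋₊ with hb
  have hx0 : (0:ℝ) ≤ (N : ℝ) ^ ((2 : ℝ) / 3) := by positivity
  have hy0 : (0:ℝ) ≤ (N : ℝ) ^ ((1 : ℝ) / 3) := by positivity
  have hx1 : (1:ℝ) ≤ (N : ℝ) ^ ((2 : ℝ) / 3) := by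
    calc (1:ℝ) = 1 ^ ((2:ℝ)/3) := (Real.one_rpow _).symm
    _ ≤ (N : ℝ) ^ ((2 : ℝ) / 3) := Real.rpow_le_rpow zero_le_one hN1 (by norm_num)
  have hy1 : (1:ℝ) ≤ (N : ℝ) ^ ((1 : ℝ) / 3) := by
    calc (1:ℝ) = 1 ^ ((1:ℝ)/3) := (Real.one_rpow _).symm
    _ ≤ (N : ℝ) ^ ((1 : ℝ) / 3) := Real.rpow_le_rpow zero_le_one hN1 (by norm_num)
  have ha1 : 1 ≤ a := Nat.le_floor (by exact_mod_cast hx1)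
  have hb1 : 1 ≤ b := Nat.le_floor (by exact_mod_cast hy1)
  have haN : a ≤ N := by
    have : (N : ℝ) ^ ((2 : ℝ) / 3) ≤ (N:ℝ) := by
      nth_rewrite 2 [← Real.rpow_one (N:ℝ)]
      exact Real.rpow_le_rpow_of_exponent_le hN1 (by norm_num)
    calc a ≤ ⌊(N:ℝ)⌋₊ := Nat.floor_le_floor this
    _ = N := Nat.floor_natCast N
  have hbN : b ≤ N := by
    have : (N : ℝ) ^ ((1 : ℝ) / 3) ≤ (N:ℝ) := by
      nth_rewrite 2 [← Real.rpow_one (N:ℝ)]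
      exact Real.rpow_le_rpow_of_exponent_le hN1 (by norm_num)
    calc b ≤ ⌊(N:ℝ)⌋₊ := Nat.floor_le_floor this
    _ = N := Nat.floor_natCast N
  have hax : (a:ℝ) ≤ (N : ℝ) ^ ((2 : ℝ) / 3) := Nat.floor_le hx0
  have hby : (b:ℝ) ≤ (N : ℝ) ^ ((1 : ℝ) / 3) := Nat.floor_le hy0
  have hxa : (N : ℝ) ^ ((2 : ℝ) / 3) < a + 1 := Nat.lt_floor_add_one _
  have hyb : (N : ℝ) ^ ((1 : ℝ) / 3) < b + 1 := Nat.lt_floor_add_one _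
  -- the filter set is a box
  have hbox : ((Finset.Icc 1 N ×ˢ Finset.Icc 1 N).filter fun p =>
      (p.1 : ℝ) ≤ (N : ℝ) ^ ((2 : ℝ) / 3) ∧ (p.2 : ℝ) ≤ (N : ℝ) ^ ((1 : ℝ) / 3))
      = Finset.Icc 1 a ×ˢ Finset.Icc 1 b := by
    ext ⟨m, n⟩
    simp only [Finset.mem_filter, Finset.mem_product, Finset.mem_Icc]
    constructor
    · rintro ⟨⟨⟨h1, _⟩, h2, _⟩, h3, h4⟩
      exact ⟨⟨h1, Nat.le_floor h3⟩, h2, Nat.le_floor h4⟩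
    · rintro ⟨⟨h1, h2⟩, h3, h4⟩
      refine ⟨⟨⟨h1, le_trans h2 haN⟩, h3, le_trans h4 hbN⟩, ?_, ?_⟩
      · exact le_trans (by exact_mod_cast h2) hax
      · exact le_trans (by exact_mod_cast h4) hby
  have hBW : BWset N = (Finset.Icc 1 a ×ˢ Finset.Icc 1 b).image
      fun p => (2 * p.1 - 1) * 2 ^ p.2 := by rw [BWset, hbox]
  -- cardinality of BWset
  have hcard : (BWset N).card = a * b := by
    rw [hBW, Finset.card_image_of_injOn, Finset.card_product, Nat.card_Icc, Nat.card_Icc]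
    · simp
    · rintro ⟨m, n⟩ hmn ⟨m', n'⟩ hmn' h
      simp only [Finset.coe_product, Set.mem_prod, Finset.mem_coe, Finset.mem_Icc] at hmn hmn'
      obtain ⟨he1, he2⟩ := odd_pow_inj hmn.1.1 hmn'.1.1 h
      exact Prod.ext he1 he2
  -- the product set bound
  classical
  set T : Finset (ℕ × ℕ) := (Finset.Icc 1 a ×ˢ Finset.Icc 1 a).filter fun p => p.1 ≤ p.2 with hT
  set D : Finset ((ℕ × ℕ) × ℕ) := T ×ˢ Finset.Icc 1 (2 * b) with hD
  have hsub : B * B ⊆ D.image fun q => (2 * q.1.1 - 1) * (2 * q.1.2 - 1) * 2 ^ q.2 := by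
    intro x hx
    rw [Finset.mem_mul] at hx
    obtain ⟨u, hu, v, hv, rfl⟩ := hx
    have hu' := hBA hu
    have hv' := hBA hv
    rw [hBW, Finset.mem_image] at hu' hv'
    obtain ⟨⟨m, n⟩, hmn, rfl⟩ := hu'
    obtain ⟨⟨m', n'⟩, hmn', rfl⟩ := hv'
    simp only [Finset.mem_product, Finset.mem_Icc] at hmn hmn'
    rw [Finset.mem_image]
    refine ⟨((min m m', max m m'), n + n'), ?_, ?_⟩
    · simp only [hD, hT, Finset.mem_product, Finset.mem_filter, Finset.mem_Icc]
      omega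
    · rcases le_total m m' with h | h
      · rw [min_eq_left h, max_eq_right h]
        set p := 2 * m - 1
        set q := 2 * m' - 1
        rw [pow_add]; ring
      · rw [min_eq_right h, max_eq_left h]
        set p := 2 * m - 1
        set q := 2 * m' - 1
        rw [pow_add]; ring
  have hTsum : T.card ≤ ∑ j ∈ Finset.Icc 1 a, j := by
    rw [Finset.card_eq_sum_card_fiberwise (f := Prod.snd) (t := Finset.Icc 1 a)
      (by intro p hp; simp only [hT, Finset.mem_coe, Finset.mem_filter, Finset.mem_product, Finset.mem_Icc] at hp
          simp only [Finset.mem_coe, Finset.mem_Icc]; omega)]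
    apply Finset.sum_le_sum
    intro j hj
    calc (T.filter fun p => p.2 = j).card ≤ (Finset.Icc 1 j ×ˢ ({j} : Finset ℕ)).card := by
          apply Finset.card_le_card
          intro p hp
          simp only [hT, Finset.mem_filter, Finset.mem_product, Finset.mem_Icc,
            Finset.mem_singleton] at hp ⊢
          omega
    _ = j := by simp
  have hBBnat : 2 * (B * B).card ≤ a * (a + 1) * (2 * b) := by
    have h1 : (B * B).card ≤ D.card := le_trans (Finset.card_le_card hsub) Finset.card_image_le
    have h2 : D.card = T.card * (2 * b) := by
      simp [hD, Nat.card_Icc]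
    have h3 : 2 * T.card ≤ a * (a + 1) := by
      calc 2 * T.card ≤ 2 * ∑ j ∈ Finset.Icc 1 a, j := by omega
      _ = a * (a + 1) := gauss_sum a
    calc 2 * (B * B).card ≤ 2 * (T.card * (2 * b)) := by rw [← h2]; omega
    _ = (2 * T.card) * (2 * b) := by ring
    _ ≤ a * (a + 1) * (2 * b) := Nat.mul_le_mul_right _ h3
  -- real abbreviations
  set A1 : ℝ := (a : ℝ) with hA1
  set B1 : ℝ := (b : ℝ) with hB1
  have hA1ge : (1 : ℝ) ≤ A1 := by rw [hA1]; exact_mod_cast ha1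
  have hB1ge : (1 : ℝ) ≤ B1 := by rw [hB1]; exact_mod_cast hb1
  have hKr : ((B * B).card : ℝ) ≤ A1 * (A1 + 1) * B1 := by
    have := hBBnat
    have h : (2 * (B * B).card : ℝ) ≤ (a * (a + 1) * (2 * b) : ℕ) := by exact_mod_cast this
    push_cast at h
    rw [hA1, hB1]
    linarith
  have hE4 : ((B.card : ℝ)) ^ 2 * ((B.card : ℝ)) ^ 2 ≤ ((B * B).card : ℝ) * (mulE B : ℝ) := by
    rw [mulE_eq_mulEnergy]
    exact_mod_cast Finset.le_card_mul_mul_mulEnergy B B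
  have hdiag : ((B.card : ℝ)) ^ 2 ≤ (mulE B : ℝ) := by
    have h : B.card * B.card ≤ mulE B := by
      rw [mulE_eq_mulEnergy]; exact Finset.le_mulEnergy
    calc ((B.card : ℝ)) ^ 2 = ((B.card * B.card : ℕ) : ℝ) := by push_cast; ring
    _ ≤ (mulE B : ℝ) := by exact_mod_cast h
  have hcB' : A1 * B1 / 2 ≤ (B.card : ℝ) := by
    rw [hcard] at hB
    push_cast at hB
    rw [hA1, hB1]
    linarith
  have hE0 : (0 : ℝ) ≤ (mulE B : ℝ) := by positivity
  have hNpos : (0 : ℝ) < (N : ℝ) := by exact_mod_cast hN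
  by_cases hN27 : 27 ≤ N
  · -- large case
    have h3nn : (0 : ℝ) ≤ 3 := by norm_num
    have h27eq : (27 : ℝ) = 3 ^ ((3 : ℕ) : ℝ) := by rw [Real.rpow_natCast]; norm_num
    have h27c : ((27 : ℝ)) ^ ((1 : ℝ) / 3) = 3 := by
      rw [h27eq, ← Real.rpow_mul h3nn,
        show ((3 : ℕ) : ℝ) * ((1 : ℝ) / 3) = ((1 : ℕ) : ℝ) by push_cast; ring,
        Real.rpow_natCast]
      norm_num
    have h27c2 : ((27 : ℝ)) ^ ((2 : ℝ) / 3) = 9 := by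
      rw [h27eq, ← Real.rpow_mul h3nn,
        show ((3 : ℕ) : ℝ) * ((2 : ℝ) / 3) = ((2 : ℕ) : ℝ) by push_cast; ring,
        Real.rpow_natCast]
      norm_num
    have hN27r : (27 : ℝ) ≤ (N : ℝ) := by exact_mod_cast hN27
    have hb3 : (3 : ℝ) ≤ B1 := by
      have h := Real.rpow_le_rpow (x := 27) (y := (N : ℝ)) (z := (1:ℝ)/3)
        (by norm_num) hN27r (by norm_num)
      rw [h27c] at h
      have h' : (3 : ℕ) ≤ b := Nat.le_floor (by exact_mod_cast h)
      rw [hB1]; exact_mod_cast h'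
    have ha9 : (9 : ℝ) ≤ A1 := by
      have h := Real.rpow_le_rpow (x := 27) (y := (N : ℝ)) (z := (2:ℝ)/3)
        (by norm_num) hN27r (by norm_num)
      rw [h27c2] at h
      have h' : (9 : ℕ) ≤ a := Nat.le_floor (by exact_mod_cast h)
      rw [hA1]; exact_mod_cast h'
    have h73 : (N : ℝ) ^ ((7 : ℝ) / 3)
        = ((N : ℝ) ^ ((2 : ℝ) / 3)) ^ (2 : ℕ) * ((N : ℝ) ^ ((1 : ℝ) / 3)) ^ (3 : ℕ) := by
      rw [← Real.rpow_natCast ((N : ℝ) ^ ((2 : ℝ) / 3)) 2,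
        ← Real.rpow_natCast ((N : ℝ) ^ ((1 : ℝ) / 3)) 3,
        ← Real.rpow_mul hN0, ← Real.rpow_mul hN0, ← Real.rpow_add hNpos]
      norm_num
    have h73le : (N : ℝ) ^ ((7 : ℝ) / 3) ≤ (A1 + 1) ^ 2 * (B1 + 1) ^ 3 := by
      rw [h73]
      exact mul_le_mul (pow_le_pow_left₀ hx0 hxa.le 2) (pow_le_pow_left₀ hy0 hyb.le 3)
        (by positivity) (by positivity)
    have hM : (0 : ℝ) < A1 * (A1 + 1) * B1 := by positivity
    have hcube : (A1 + 1) * (B1 + 1) ≤ 40 / 27 * (A1 * B1) := by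
      nlinarith [mul_nonneg (sub_nonneg.mpr ha9) (sub_nonneg.mpr hb3)]
    have hcube3 : ((A1 + 1) * (B1 + 1)) ^ 3 ≤ (40 / 27 * (A1 * B1)) ^ 3 :=
      pow_le_pow_left₀ (by positivity) hcube 3
    have hkey : (A1 + 1) ^ 2 * (B1 + 1) ^ 3 * (A1 * (A1 + 1) * B1) ≤ 64 * (A1 * B1 / 2) ^ 4 := by
      calc (A1 + 1) ^ 2 * (B1 + 1) ^ 3 * (A1 * (A1 + 1) * B1)
          = ((A1 + 1) * (B1 + 1)) ^ 3 * (A1 * B1) := by ring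
      _ ≤ (40 / 27 * (A1 * B1)) ^ 3 * (A1 * B1) :=
          mul_le_mul_of_nonneg_right hcube3 (by positivity)
      _ = 64000 / 19683 * (A1 * B1) ^ 4 := by ring
      _ ≤ 4 * (A1 * B1) ^ 4 := mul_le_mul_of_nonneg_right (by norm_num) (by positivity)
      _ = 64 * (A1 * B1 / 2) ^ 4 := by ring
    have step1 : (A1 * B1 / 2) ^ 4 ≤ (A1 * (A1 + 1) * B1) * (mulE B : ℝ) := by
      calc (A1 * B1 / 2) ^ 4 ≤ ((B.card : ℝ)) ^ 4 := pow_le_pow_left₀ (by positivity) hcB' 4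
      _ = ((B.card : ℝ)) ^ 2 * ((B.card : ℝ)) ^ 2 := by ring
      _ ≤ ((B * B).card : ℝ) * (mulE B : ℝ) := hE4
      _ ≤ (A1 * (A1 + 1) * B1) * (mulE B : ℝ) := mul_le_mul_of_nonneg_right hKr hE0
    have hfin : (N : ℝ) ^ ((7 : ℝ) / 3) * (A1 * (A1 + 1) * B1)
        ≤ 64 * (mulE B : ℝ) * (A1 * (A1 + 1) * B1) := by
      calc (N : ℝ) ^ ((7 : ℝ) / 3) * (A1 * (A1 + 1) * B1)
          ≤ (A1 + 1) ^ 2 * (B1 + 1) ^ 3 * (A1 * (A1 + 1) * B1) :=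
            mul_le_mul_of_nonneg_right h73le hM.le
      _ ≤ 64 * (A1 * B1 / 2) ^ 4 := hkey
      _ ≤ 64 * ((A1 * (A1 + 1) * B1) * (mulE B : ℝ)) := by linarith
      _ = 64 * (mulE B : ℝ) * (A1 * (A1 + 1) * B1) := by ring
    have : (N : ℝ) ^ ((7 : ℝ) / 3) ≤ 64 * (mulE B : ℝ) := le_of_mul_le_mul_right hfin hM
    norm_num
    linarith
  · -- small case : N ≤ 26
    push_neg at hN27
    have h3nn : (0 : ℝ) ≤ 3 := by norm_num
    have h27eq : (27 : ℝ) = 3 ^ ((3 : ℕ) : ℝ) := by rw [Real.rpow_natCast]; norm_num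
    have h27c : ((27 : ℝ)) ^ ((1 : ℝ) / 3) = 3 := by
      rw [h27eq, ← Real.rpow_mul h3nn,
        show ((3 : ℕ) : ℝ) * ((1 : ℝ) / 3) = ((1 : ℕ) : ℝ) by push_cast; ring,
        Real.rpow_natCast]
      norm_num
    have hylt3 : (N : ℝ) ^ ((1 : ℝ) / 3) < 3 := by
      have h := Real.rpow_lt_rpow (x := (N : ℝ)) (y := 27) (z := (1:ℝ)/3)
        hN0 (by exact_mod_cast hN27) (by norm_num)
      rwa [h27c] at h
    have hble : b ≤ 2 := by
      have : (b : ℝ) < 3 := lt_of_le_of_lt hby hylt3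
      exact_mod_cast Nat.lt_succ_iff.mp (by exact_mod_cast this)
    have h23 : (N : ℝ) ^ ((2 : ℝ) / 3) = ((N : ℝ) ^ ((1 : ℝ) / 3)) ^ (2 : ℕ) := by
      rw [← Real.rpow_natCast ((N : ℝ) ^ ((1 : ℝ) / 3)) 2, ← Real.rpow_mul hN0]
      norm_num
    have hb2a : b ^ 2 ≤ a := by
      apply Nat.le_floor
      rw [h23]
      push_cast
      exact pow_le_pow_left₀ (by positivity) hby 2
    have hab2 : a < (b + 1) ^ 2 := by
      have h1 : (a : ℝ) < ((b : ℝ) + 1) ^ 2 := by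
        calc (a : ℝ) ≤ (N : ℝ) ^ ((2 : ℝ) / 3) := hax
        _ = ((N : ℝ) ^ ((1 : ℝ) / 3)) ^ (2 : ℕ) := h23
        _ < ((b : ℝ) + 1) ^ 2 := by
            apply pow_lt_pow_left₀ hyb hy0
            norm_num
      have : (a : ℝ) < (((b + 1) ^ 2 : ℕ) : ℝ) := by push_cast; linarith
      exact_mod_cast this
    have hnum := small_case_num a b hb1 hble hb2a hab2
    have hnumR : (B1 + 1) * (A1 + 1) ^ 3 ≤ 16 * A1 ^ 2 * B1 ^ 2 := by
      have : (((b + 1) * (a + 1) ^ 3 : ℕ) : ℝ) ≤ ((16 * a ^ 2 * b ^ 2 : ℕ) : ℝ) := by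
        exact_mod_cast hnum
      push_cast at this
      rw [hA1, hB1]
      linarith
    have h73b : (N : ℝ) ^ ((7 : ℝ) / 3)
        = ((N : ℝ) ^ ((1 : ℝ) / 3)) * ((N : ℝ) ^ ((2 : ℝ) / 3)) ^ (3 : ℕ) := by
      rw [← Real.rpow_natCast ((N : ℝ) ^ ((2 : ℝ) / 3)) 3,
        ← Real.rpow_mul hN0, ← Real.rpow_add hNpos]
      norm_num
    have h1 : (N : ℝ) ^ ((7 : ℝ) / 3) ≤ (B1 + 1) * (A1 + 1) ^ 3 := by
      rw [h73b]
      exact mul_le_mul hyb.le (pow_le_pow_left₀ hx0 hxa.le 3) (by positivity) (by positivity)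
    have h3 : (A1 * B1 / 2) ^ 2 ≤ ((B.card : ℝ)) ^ 2 := pow_le_pow_left₀ (by positivity) hcB' 2
    have h4 : 16 * A1 ^ 2 * B1 ^ 2 = 64 * ((A1 * B1 / 2) ^ 2) := by ring
    norm_num
    linarith
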